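/- Let D be a family of finite sets indexed by a finite set I such that for every subset J ⊆ I, the union of the sets indexed by J has size at least 2|J|. Then one can choose for each index i a 2-element subset T_i of D_i such that the sets T_i are pairwise disjoint. -/
import Mathlib


/-- Polygamous Hall theorem: if every subfamily `J` of a finite family of finite
sets covers at least `2|J|` elements, then one can pick pairwise disjoint
2-element subsets `T i ⊆ D i`. -/
theorem stmt_7 {ι α : Type*} [Fintype ι] [DecidableEq ι] [DecidableEq α]
    (D : ι → Finset α)
    (hHall : ∀ J : Finset ι, 2 * J.card ≤ (J.biUnion D).card) :
    ∃ T : ι → Finset α,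
      (∀ i, T i ⊆ D i ∧ (T i).card = 2) ∧
      (∀ i j, i ≠ j → Disjoint (T i) (T j)) := by
  have key : ∀ s : Finset (ι × Fin 2), s.card ≤ (s.biUnion fun p : ι × Fin 2 => D p.1).card := by
    intro s
    have h1 : s ⊆ (s.image Prod.fst) ×ˢ (Finset.univ : Finset (Fin 2)) := by
      intro p hp
      simp only [Finset.mem_product, Finset.mem_image, Finset.mem_univ, and_true]
      exact ⟨p, hp, rfl⟩
    calc s.card ≤ ((s.image Prod.fst) ×ˢ (Finset.univ : Finset (Fin 2))).card :=
          Finset.card_le_card h1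
      _ = 2 * (s.image Prod.fst).card := by
          rw [Finset.card_product]; simp [Nat.mul_comm]
      _ ≤ ((s.image Prod.fst).biUnion D).card := hHall _
      _ = (s.biUnion fun p : ι × Fin 2 => D p.1).card := by
          rw [Finset.image_biUnion]
  obtain ⟨f, hf, hfm⟩ := (Finset.all_card_le_biUnion_card_iff_exists_injective
      (fun p : ι × Fin 2 => D p.1)).mp key
  refine ⟨fun i => {f (i, 0), f (i, 1)}, fun i => ⟨?_, ?_⟩, fun i j hij => ?_⟩
  · intro x hx
    simp only [Finset.mem_insert, Finset.mem_singleton] at hx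
    rcases hx with h | h <;> subst h <;> exact hfm _
  · rw [Finset.card_insert_of_notMem, Finset.card_singleton]
    simp only [Finset.mem_singleton]
    intro h
    have := hf h
    simp only [Prod.mk.injEq] at this
    exact absurd this.2 (by decide)
  · rw [Finset.disjoint_left]
    intro x hx hy
    simp only [Finset.mem_insert, Finset.mem_singleton] at hx hy
    rcases hx with h | h <;> rcases hy with h' | h' <;>
      exact hij (congrArg Prod.fst (hf (h.symm.trans h')))
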